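/- Let (M, d) be a pseudometric space, K a positive integer, μ ∈ M a fixed point, and μ₁,…,μ_K independent, identically distributed M-valued random elements with E[d(μ₁, μ)²] < ∞. Let δ ∈ (0,1) and suppose K = ⌈8 log(1/δ)⌉. Let μ* be a random element of M that almost surely minimizes ν ↦ min_{I: |I|>K/2} max_{j∈I} d(μ_j, ν). Then P(d(μ*, μ) > 4·√(E[d(μ₁,μ)²])) ≤ δ. -/

import Mathlib

open Finset MeasureTheory ProbabilityTheory

/-- The GROS objective: `ν ↦ min_{I ⊆ [K], |I| > K/2} max_{j ∈ I} d(μ_j, ν)`. -/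
noncomputable def grosObj {M : Type*} [PseudoMetricSpace M] (K : ℕ)
    (μs : Fin K → M) (ν : M) : ℝ :=
  ⨅ I : {I : Finset (Fin K) // K < 2 * I.card}, ⨆ j ∈ I.1, dist (μs j) ν

lemma gros_agg {M : Type*} [PseudoMetricSpace M] {K : ℕ}
    (μs : Fin K → M) (μ0 ν : M) {σ : ℝ} (hσ : 0 ≤ σ)
    (hν : grosObj K μs ν ≤ grosObj K μs μ0)
    {G : Finset (Fin K)} (hGle : ∀ j ∈ G, dist (μs j) μ0 ≤ 2 * σ)
    (hGcard : K < 2 * G.card) :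
    dist ν μ0 ≤ 4 * σ := by
  have h2σ : (0:ℝ) ≤ 2 * σ := by positivity
  haveI : Nonempty {I : Finset (Fin K) // K < 2 * I.card} := ⟨⟨G, hGcard⟩⟩
  have hbdd : ∀ ν' : M, BddBelow (Set.range
      (fun I : {I : Finset (Fin K) // K < 2 * I.card} => ⨆ j ∈ I.1, dist (μs j) ν')) :=
    fun ν' => (Set.finite_range _).bddBelow
  have h1 : grosObj K μs μ0 ≤ 2 * σ := by
    refine (ciInf_le (hbdd μ0) ⟨G, hGcard⟩).trans ?_
    exact Real.iSup_le (fun j => Real.iSup_le (fun hj => hGle j hj) h2σ) h2σ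
  obtain ⟨I₀, hI₀⟩ := Finite.exists_min
    (fun I : {I : Finset (Fin K) // K < 2 * I.card} => ⨆ j ∈ I.1, dist (μs j) ν)
  have heq : grosObj K μs ν = ⨆ j ∈ I₀.1, dist (μs j) ν :=
    le_antisymm (ciInf_le (hbdd ν) I₀) (le_ciInf hI₀)
  have h2 : (⨆ j ∈ I₀.1, dist (μs j) ν) ≤ 2 * σ := by
    rw [← heq]; exact hν.trans h1
  have hcard : 0 < (I₀.1 ∩ G).card := by
    have h3 := Finset.card_union_add_card_inter I₀.1 G
    have h4 : (I₀.1 ∪ G).card ≤ K := by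
      simpa using Finset.card_le_univ (I₀.1 ∪ G)
    have h5 := I₀.2
    omega
  obtain ⟨j, hj⟩ := Finset.card_pos.mp hcard
  obtain ⟨hjI, hjG⟩ := Finset.mem_inter.mp hj
  have hd1 : dist (μs j) ν ≤ 2 * σ := by
    refine le_trans ?_ h2
    have := le_ciSup (f := fun j => ⨆ _ : j ∈ I₀.1, dist (μs j) ν)
      (Set.finite_range _).bddAbove j
    refine le_trans ?_ this
    exact le_of_eq (ciSup_pos (f := fun _ : j ∈ I₀.1 => dist (μs j) ν) hjI).symm
  calc dist ν μ0 ≤ dist ν (μs j) + dist (μs j) μ0 := dist_triangle _ _ _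
    _ ≤ 2*σ + 2*σ := add_le_add (by rw [dist_comm]; exact hd1) (hGle j hjG)
    _ = 4*σ := by ring

/-- Sub-Gaussian aggregation (Theorem 2.1): with `K = ⌈8 log(1/δ)⌉` i.i.d.
estimators with finite second moment of `d(μ₁, μ)`, the GROS aggregate `μ*`
satisfies `P(d(μ*, μ) > 4√(E[d(μ₁,μ)²])) ≤ δ`. -/
theorem stmt7 {Ω M : Type*} [MeasureSpace Ω] [IsProbabilityMeasure (ℙ : Measure Ω)]
    [PseudoMetricSpace M] [MeasurableSpace M] [BorelSpace M]
    (δ : ℝ) (hδ : δ ∈ Set.Ioo (0 : ℝ) 1)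
    (K : ℕ) (hKδ : K = ⌈8 * Real.log (1 / δ)⌉₊) (hKpos : 0 < K)
    (μ0 : M) (μs : Fin K → Ω → M) (hmeas : ∀ k, Measurable (μs k))
    (hind : iIndepFun μs ℙ)
    (hident : ∀ k, IdentDistrib (μs k) (μs ⟨0, hKpos⟩) ℙ ℙ)
    (hint : Integrable (fun ω => dist (μs ⟨0, hKpos⟩ ω) μ0 ^ 2) ℙ)
    (μstar : Ω → M) (hμstar : Measurable μstar)
    (hmin : ∀ᵐ ω ∂ℙ, ∀ ν : M,
      grosObj K (fun k => μs k ω) (μstar ω) ≤ grosObj K (fun k => μs k ω) ν) :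
    ℙ {ω | 4 * Real.sqrt (∫ ω', dist (μs ⟨0, hKpos⟩ ω') μ0 ^ 2 ∂ℙ) <
        dist (μstar ω) μ0} ≤ ENNReal.ofReal δ := by
  classical
  obtain ⟨hδ0, hδ1⟩ := hδ
  set k0 : Fin K := ⟨0, hKpos⟩ with hk0
  set σ2 : ℝ := ∫ ω', dist (μs k0 ω') μ0 ^ 2 ∂ℙ with hσ2
  have hσ2nn : 0 ≤ σ2 := integral_nonneg fun ω => by positivity
  set σ : ℝ := Real.sqrt σ2 with hσdef
  have hσnn : 0 ≤ σ := Real.sqrt_nonneg _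
  have hdm : Measurable (fun x : M => dist x μ0) :=
    (Continuous.dist continuous_id continuous_const).measurable
  set Y : Fin K → Ω → ℝ := fun k ω => dist (μs k ω) μ0 with hYdef
  have hYm : ∀ k, Measurable (Y k) := fun k => hdm.comp (hmeas k)
  have hYnn : ∀ k ω, 0 ≤ Y k ω := fun k ω => dist_nonneg
  have hYid : ∀ k, IdentDistrib (Y k) (Y k0) ℙ ℙ := fun k => (hident k).comp hdm
  -- event sets are measurable
  have hEm : ∀ k, MeasurableSet {ω | 2*σ < Y k ω} :=
    fun k => measurableSet_lt measurable_const (hYm k)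
  -- identical probabilities
  have hp_eq : ∀ k, ℙ {ω | 2*σ < Y k ω} = ℙ {ω | 2*σ < Y k0 ω} := by
    intro k
    exact (hYid k).measure_mem_eq (measurableSet_Ioi (a := 2*σ))
  -- Markov: probability of a bad estimator is at most 1/4
  have hmarkov : (ℙ {ω | 2*σ < Y k0 ω}).toReal ≤ 1/4 := by
    rcases eq_or_lt_of_le hσ2nn with h0 | hpos
    · have hae : (fun ω => dist (μs k0 ω) μ0 ^ 2) =ᵐ[ℙ] 0 := by
        rw [← integral_eq_zero_iff_of_nonneg (fun ω => by positivity) hint]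
        exact h0.symm
      have hσ0 : σ = 0 := by rw [hσdef, ← h0, Real.sqrt_zero]
      have hz : ℙ {ω | 2*σ < Y k0 ω} = 0 := by
        refine measure_eq_zero_iff_ae_notMem.mpr ?_
        filter_upwards [hae] with ω hω
        have hd0 : dist (μs k0 ω) μ0 = 0 :=
          pow_eq_zero_iff (two_ne_zero) |>.mp hω
        simp only [Set.mem_setOf_eq, not_lt, hσ0, mul_zero, hYdef]
        exact le_of_eq hd0
      rw [hz]; norm_num
    · have hsub : {ω | 2*σ < Y k0 ω} ⊆ {ω | 4*σ2 ≤ dist (μs k0 ω) μ0 ^ 2} := by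
        intro ω hω
        have h1 : 2*σ < dist (μs k0 ω) μ0 := hω
        have h2 : (2*σ)^2 ≤ dist (μs k0 ω) μ0 ^ 2 := by
          nlinarith [dist_nonneg (x := μs k0 ω) (y := μ0), hσnn]
        have h3 : (2*σ)^2 = 4*σ2 := by
          rw [mul_pow, hσdef, Real.sq_sqrt hσ2nn]; ring
        simp only [Set.mem_setOf_eq, ← h3]
        exact h2
      have hmk := mul_meas_ge_le_integral_of_nonneg
        (Filter.Eventually.of_forall (fun ω => by positivity)) hint (4*σ2)
      rw [← hσ2, measureReal_def] at hmk
      have hmono := ENNReal.toReal_mono (measure_ne_top ℙ _) (measure_mono hsub)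
      nlinarith [hmono, hmk, hpos,
        mul_le_mul_of_nonneg_left hmono (le_of_lt (by linarith : (0:ℝ) < 4*σ2))]
  -- indicator variables
  set X : Fin K → Ω → ℝ := fun k ω => if 2*σ < Y k ω then 1 else 0 with hXdef
  have hXm : ∀ k, Measurable (X k) := fun k =>
    Measurable.ite (hEm k) measurable_const measurable_const
  have hXind : iIndepFun X ℙ := by
    have hg : Measurable (fun x : M => if 2*σ < dist x μ0 then (1:ℝ) else 0) :=
      Measurable.ite (measurableSet_lt measurable_const hdm) measurable_const measurable_const
    exact hind.comp (fun _ => (fun x : M => if 2*σ < dist x μ0 then (1:ℝ) else 0)) fun _ => hg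
  have hXint : ∀ k, Integrable (X k) ℙ := by
    intro k
    refine Integrable.mono' (integrable_const 1) (hXm k).aestronglyMeasurable ?_
    filter_upwards with ω
    by_cases h : 2*σ < Y k ω <;> simp [hXdef, h]
  have hEX : ∀ k, ∫ ω, X k ω ∂ℙ ≤ 1/4 := by
    intro k
    have h1 : ∫ ω, X k ω ∂ℙ = (ℙ {ω | 2*σ < Y k ω}).toReal := by
      rw [show X k = Set.indicator {ω | 2*σ < Y k ω} (fun _ => (1:ℝ)) by
        funext ω; simp [hXdef, Set.indicator_apply]]
      exact integral_indicator_one (hEm k)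
    rw [h1, hp_eq k]; exact hmarkov
  -- mgf bound for each indicator at t = log 3
  have ht3 : (0:ℝ) ≤ Real.log 3 := Real.log_nonneg (by norm_num)
  have hexp3 : Real.exp (Real.log 3) = 3 := Real.exp_log (by norm_num)
  have hmgfX : ∀ k, mgf (X k) ℙ (Real.log 3) ≤ 3/2 := by
    intro k
    have heq : (fun ω => Real.exp (Real.log 3 * X k ω)) = fun ω => 1 + 2 * X k ω := by
      funext ω
      by_cases h : 2*σ < Y k ω <;> simp [hXdef, h, hexp3] <;> norm_num
    have : mgf (X k) ℙ (Real.log 3) = 1 + 2 * ∫ ω, X k ω ∂ℙ := by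
      rw [mgf, heq, integral_add (integrable_const 1) ((hXint k).const_mul 2),
        integral_const, integral_const_mul]
      simp
    rw [this]; linarith [hEX k]
  -- the sum
  set S : Ω → ℝ := ∑ k, X k with hSdef
  have hSapp : ∀ ω, S ω = ∑ k, X k ω := fun ω => by rw [hSdef]; simp
  have hSm : Measurable S := by
    have : Measurable fun ω => ∑ k, X k ω := Finset.measurable_sum _ fun k _ => hXm k
    have he : S = fun ω => ∑ k, X k ω := funext hSapp
    rw [he]; exact this
  have hSle : ∀ ω, S ω ≤ K := by
    intro ω
    rw [hSapp]
    calc ∑ k, X k ω ≤ ∑ _k : Fin K, (1:ℝ) := by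
          refine Finset.sum_le_sum fun k _ => ?_
          by_cases h : 2*σ < Y k ω <;> simp [hXdef, h]
      _ = K := by simp
  have hSnn : ∀ ω, 0 ≤ S ω := by
    intro ω; rw [hSapp]
    refine Finset.sum_nonneg fun k _ => ?_
    by_cases h : 2*σ < Y k ω <;> simp [hXdef, h]
  have hSint : Integrable (fun ω => Real.exp (Real.log 3 * S ω)) ℙ := by
    refine Integrable.mono' (integrable_const (Real.exp (Real.log 3 * K)))
      ((hSm.const_mul _).exp.aestronglyMeasurable) ?_
    filter_upwards with ω
    rw [Real.norm_eq_abs, abs_of_pos (Real.exp_pos _)]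
    exact Real.exp_le_exp.mpr (mul_le_mul_of_nonneg_left (hSle ω) ht3)
  -- Chernoff
  have hchern := measure_ge_le_exp_mul_mgf (μ := ℙ) (X := S) ((K:ℝ)/2) ht3 hSint
  have hmgfS : mgf S ℙ (Real.log 3) ≤ (3/2)^K := by
    rw [hSdef, hXind.mgf_sum hXm Finset.univ]
    calc ∏ k, mgf (X k) ℙ (Real.log 3) ≤ ∏ _k : Fin K, (3/2:ℝ) :=
          Finset.prod_le_prod (fun k _ => mgf_nonneg) (fun k _ => hmgfX k)
      _ = (3/2)^K := by simp [div_pow]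
  -- numeric bound
  have hnum : Real.exp (-(Real.log 3) * ((K:ℝ)/2)) * (3/2)^K ≤ δ := by
    have hKge : 8 * Real.log (1/δ) ≤ (K:ℝ) := by rw [hKδ]; exact Nat.le_ceil _
    have hlogδ : Real.log (1/δ) = -Real.log δ := by rw [one_div, Real.log_inv]
    have hlog2 : (1:ℝ) ≤ 8 * Real.log 2 - 4 * Real.log 3 := by
      have h256 : Real.log (256/81) = 8 * Real.log 2 - 4 * Real.log 3 := by
        rw [show (256:ℝ)/81 = 2^8 / 3^4 by norm_num,
          Real.log_div (by positivity) (by positivity), Real.log_pow, Real.log_pow]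
        push_cast; ring
      rw [← h256, Real.le_log_iff_exp_le (by norm_num)]
      calc Real.exp 1 ≤ 2.7182818286 := (Real.exp_one_lt_d9).le
        _ ≤ 256/81 := by norm_num
    have hLHS : Real.exp (-(Real.log 3) * ((K:ℝ)/2)) = Real.exp (-(Real.log 3)/2) ^ K := by
      rw [← Real.exp_nat_mul]; congr 1; ring
    rw [hLHS, ← mul_pow]
    have hapos : (0:ℝ) < Real.exp (-(Real.log 3)/2) * (3/2) := by positivity
    have hloga : Real.log (Real.exp (-(Real.log 3)/2) * (3/2)) ≤ -(1/8) := by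
      rw [Real.log_mul (by positivity) (by norm_num), Real.log_exp,
        show (3:ℝ)/2 = 3/2 from rfl, Real.log_div (by norm_num) (by norm_num)]
      linarith
    have h1 : Real.log ((Real.exp (-(Real.log 3)/2) * (3/2))^K) ≤ Real.log δ := by
      rw [Real.log_pow]
      have hm : (K:ℝ) * Real.log (Real.exp (-(Real.log 3)/2) * (3/2)) ≤ (K:ℝ) * (-(1/8)) :=
        mul_le_mul_of_nonneg_left hloga (Nat.cast_nonneg K)
      have h2 : -Real.log δ ≤ (K:ℝ)/8 := by linarith
      push_cast
      linarith
    calc (Real.exp (-(Real.log 3)/2) * (3/2))^K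
        = Real.exp (Real.log ((Real.exp (-(Real.log 3)/2) * (3/2))^K)) :=
          (Real.exp_log (pow_pos hapos K)).symm
      _ ≤ Real.exp (Real.log δ) := Real.exp_le_exp.mpr h1
      _ = δ := Real.exp_log hδ0
  have hchern2 : (ℙ {ω | (K:ℝ)/2 ≤ S ω}).toReal ≤ δ := by
    refine hchern.trans (le_trans ?_ hnum)
    exact mul_le_mul_of_nonneg_left hmgfS (le_of_lt (Real.exp_pos _))
  -- a.e. inclusion via aggregation lemma
  have hincl : ∀ᵐ ω ∂ℙ, 4*σ < dist (μstar ω) μ0 → (K:ℝ)/2 ≤ S ω := by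
    filter_upwards [hmin] with ω hω hbad
    by_contra hcon
    push_neg at hcon
    set G : Finset (Fin K) := Finset.univ.filter (fun k => ¬ 2*σ < Y k ω) with hGdef
    have hSω : S ω = ((Finset.univ.filter (fun k => 2*σ < Y k ω)).card : ℝ) := by
      rw [hSapp]; simp [hXdef]
    have hsplit : (Finset.univ.filter (fun k => 2*σ < Y k ω)).card + G.card = K := by
      rw [hGdef, Finset.card_filter_add_card_filter_not]
      simp
    have hbadcard : 2 * (Finset.univ.filter (fun k => 2*σ < Y k ω)).card < K := by
      have : ((Finset.univ.filter (fun k => 2*σ < Y k ω)).card : ℝ) < (K:ℝ)/2 := by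
        rw [← hSω]; exact hcon
      have h2 : 2 * ((Finset.univ.filter (fun k => 2*σ < Y k ω)).card : ℝ) < K := by
        linarith
      exact_mod_cast h2
    have hGcard : K < 2 * G.card := by omega
    have := gros_agg (fun k => μs k ω) μ0 (μstar ω) hσnn (hω μ0)
      (fun j hj => not_lt.mp (Finset.mem_filter.mp hj).2) hGcard
    linarith
  -- conclude
  have hmono : ℙ {ω | 4 * σ < dist (μstar ω) μ0} ≤ ℙ {ω | (K:ℝ)/2 ≤ S ω} := by
    refine measure_mono_ae ?_
    filter_upwards [hincl] with ω h
    exact h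
  refine hmono.trans ?_
  rw [← ENNReal.ofReal_toReal (measure_ne_top ℙ _)]
  exact ENNReal.ofReal_le_ofReal hchern2
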